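/- arXiv:1912.12201 — 2 statements merged into one kernel-verified Lean document; each statement's English description precedes it below -/
import Mathlib

section
/- Let Z = {z_k} ⊂ ℂ be a sequence separated from the imaginary axis, i.e., there exists c > 0 with |Re z_k| ≥ c|z_k| for all sufficiently large k, with all z_k ≠ 0. If there is a constant C ≥ 0 such that l_Z(r,R) ≤ C·ln(R/r) + C for all 0 < r < R < +∞, where l_Z(r,R) = max{Σ_{r<|z_k|≤R, Re z_k>0} Re(1/z_k), Σ_{r<|z_k|≤R, Re z_k<0} Re(−1/z_k)}, then Z has finite upper density: limsup_{r→∞} n_Z(r)/r < +∞. -/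
open Filter Complex

set_option maxHeartbeats 2000000 in
/-- If a sequence `Z` (with no limit points, all terms nonzero) is separated from the imaginary
axis and its logarithmic characteristic `l_Z(r,R)` satisfies `l_Z(r,R) ≤ C·ln(R/r) + C`
for all `0 < r < R`, then `Z` has finite upper density. -/
theorem stmt_8 (z : ℕ → ℂ) (hz : ∀ k, z k ≠ 0)
    (hfin : ∀ r : ℝ, ({k : ℕ | ‖z k‖ ≤ r}).Finite)
    (hsep : ∃ c : ℝ, 0 < c ∧ ∀ᶠ k in atTop, c * ‖z k‖ ≤ |(z k).re|)
    (C : ℝ) (hC : 0 ≤ C)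
    (hl : ∀ r R : ℝ, 0 < r → r < R →
      max (∑' k : ℕ, if r < ‖z k‖ ∧ ‖z k‖ ≤ R ∧ 0 < (z k).re
              then ((z k)⁻¹).re else 0)
          (∑' k : ℕ, if r < ‖z k‖ ∧ ‖z k‖ ≤ R ∧ (z k).re < 0
              then -((z k)⁻¹).re else 0)
        ≤ C * Real.log (R / r) + C) :
    Filter.IsBoundedUnder (· ≤ ·) Filter.atTop
      (fun r : ℝ => (Nat.card {k : ℕ | ‖z k‖ ≤ r} : ℝ) / r) := by
  obtain ⟨c, hc, hev⟩ := hsep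
  obtain ⟨N, hN⟩ := eventually_atTop.mp hev
  set B : ℝ := C * Real.log 2 + C with hBdef
  have hlog2 : (0:ℝ) ≤ Real.log 2 := Real.log_nonneg (by norm_num)
  have hB0 : 0 ≤ B := by positivity
  set D : ℝ := 4 * B / c with hDdef
  have hD0 : 0 ≤ D := by positivity
  have habs : ∀ k, 0 < ‖z k‖ := fun k => by
    simpa using (norm_pos_iff.mpr (hz k))
  -- annulus bound
  have key : ∀ r : ℝ, 0 < r →
      ((((hfin (2*r)).toFinset.filter
          (fun k => r < ‖z k‖ ∧ N ≤ k)).card : ℝ)) ≤ D * r := by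
    intro r hr
    have hmax := hl r (2*r) hr (by linarith)
    rw [show (2*r)/r = (2:ℝ) by field_simp] at hmax
    -- positive part
    set f : ℕ → ℝ := fun k =>
      if r < ‖z k‖ ∧ ‖z k‖ ≤ 2*r ∧ 0 < (z k).re
      then ((z k)⁻¹).re else 0 with hfdef
    set g : ℕ → ℝ := fun k =>
      if r < ‖z k‖ ∧ ‖z k‖ ≤ 2*r ∧ (z k).re < 0
      then -((z k)⁻¹).re else 0 with hgdef
    have hf0 : ∀ k, 0 ≤ f k := by
      intro k
      simp only [hfdef]
      split_ifs with h
      · rw [Complex.inv_re]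
        exact div_nonneg h.2.2.le (Complex.normSq_nonneg _)
      · exact le_refl 0
    have hg0 : ∀ k, 0 ≤ g k := by
      intro k
      simp only [hgdef]
      split_ifs with h
      · rw [Complex.inv_re]
        have := div_nonpos_of_nonpos_of_nonneg h.2.2.le (Complex.normSq_nonneg (z k))
        linarith
      · exact le_refl 0
    have hfsupp : ∀ k ∉ (hfin (2*r)).toFinset, f k = 0 := by
      intro k hk
      simp only [Set.Finite.mem_toFinset, Set.mem_setOf_eq, not_le] at hk
      simp only [hfdef]
      rw [if_neg]
      rintro ⟨_, h2, _⟩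
      linarith
    have hgsupp : ∀ k ∉ (hfin (2*r)).toFinset, g k = 0 := by
      intro k hk
      simp only [Set.Finite.mem_toFinset, Set.mem_setOf_eq, not_le] at hk
      simp only [hgdef]
      rw [if_neg]
      rintro ⟨_, h2, _⟩
      linarith
    have hfs : Summable f := summable_of_ne_finset_zero hfsupp
    have hgs : Summable g := summable_of_ne_finset_zero hgsupp
    have hft : ∑' k, f k ≤ B := le_trans (le_max_left _ _) hmax
    have hgt : ∑' k, g k ≤ B := le_trans (le_max_right _ _) hmax
    set Tp : Finset ℕ := (hfin (2*r)).toFinset.filter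
        (fun k => r < ‖z k‖ ∧ N ≤ k ∧ 0 < (z k).re) with hTp
    set Tm : Finset ℕ := (hfin (2*r)).toFinset.filter
        (fun k => r < ‖z k‖ ∧ N ≤ k ∧ (z k).re < 0) with hTm
    have hTpb : ∀ k ∈ Tp, c / (2*r) ≤ f k := by
      intro k hk
      simp only [hTp, Finset.mem_filter, Set.Finite.mem_toFinset, Set.mem_setOf_eq] at hk
      obtain ⟨hk2r, hk1, hkN, hkre⟩ := hk
      have hsep := hN k hkN
      rw [abs_of_pos hkre] at hsep
      simp only [hfdef]
      rw [if_pos ⟨hk1, hk2r, hkre⟩, Complex.inv_re, Complex.normSq_apply]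
      have ha := habs k
      have h2 : ‖z k‖ * ‖z k‖
          = (z k).re * (z k).re + (z k).im * (z k).im := by
        rw [← Complex.normSq_apply, ← Complex.sq_norm, pow_two]
      rw [div_le_div_iff₀ (by linarith) (by nlinarith)]
      have e1 : c * ‖z k‖ * ‖z k‖ ≤ (z k).re * ‖z k‖ :=
        mul_le_mul_of_nonneg_right hsep ha.le
      have e2 : (z k).re * ‖z k‖ ≤ (z k).re * (2*r) :=
        mul_le_mul_of_nonneg_left hk2r hkre.le
      nlinarith [e1, e2, h2, hc.le]
    have hTmb : ∀ k ∈ Tm, c / (2*r) ≤ g k := by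
      intro k hk
      simp only [hTm, Finset.mem_filter, Set.Finite.mem_toFinset, Set.mem_setOf_eq] at hk
      obtain ⟨hk2r, hk1, hkN, hkre⟩ := hk
      have hsep := hN k hkN
      rw [abs_of_neg hkre] at hsep
      simp only [hgdef]
      rw [if_pos ⟨hk1, hk2r, hkre⟩, Complex.inv_re, Complex.normSq_apply, ← neg_div]
      have ha := habs k
      have h2 : ‖z k‖ * ‖z k‖
          = (z k).re * (z k).re + (z k).im * (z k).im := by
        rw [← Complex.normSq_apply, ← Complex.sq_norm, pow_two]
      rw [div_le_div_iff₀ (by linarith) (by nlinarith)]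
      have e1 : c * ‖z k‖ * ‖z k‖ ≤ (-(z k).re) * ‖z k‖ :=
        mul_le_mul_of_nonneg_right hsep ha.le
      have e2 : (-(z k).re) * ‖z k‖ ≤ (-(z k).re) * (2*r) :=
        mul_le_mul_of_nonneg_left hk2r (by linarith)
      nlinarith [e1, e2, h2, hc.le]
    have hTpcard : (Tp.card : ℝ) * (c / (2*r)) ≤ B := by
      calc (Tp.card : ℝ) * (c / (2*r)) = Tp.card • (c / (2*r)) := by
            rw [nsmul_eq_mul]
        _ ≤ ∑ k ∈ Tp, f k := Finset.card_nsmul_le_sum Tp f _ hTpb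
        _ ≤ ∑' k, f k := Summable.sum_le_tsum Tp (fun k _ => hf0 k) hfs
        _ ≤ B := hft
    have hTmcard : (Tm.card : ℝ) * (c / (2*r)) ≤ B := by
      calc (Tm.card : ℝ) * (c / (2*r)) = Tm.card • (c / (2*r)) := by
            rw [nsmul_eq_mul]
        _ ≤ ∑ k ∈ Tm, g k := Finset.card_nsmul_le_sum Tm g _ hTmb
        _ ≤ ∑' k, g k := Summable.sum_le_tsum Tm (fun k _ => hg0 k) hgs
        _ ≤ B := hgt
    have hsub : (hfin (2*r)).toFinset.filter (fun k => r < ‖z k‖ ∧ N ≤ k)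
        ⊆ Tp ∪ Tm := by
      intro k hk
      simp only [Finset.mem_filter, Set.Finite.mem_toFinset, Set.mem_setOf_eq] at hk
      obtain ⟨hk2r, hk1, hkN⟩ := hk
      have hsep := hN k hkN
      have hre : (z k).re ≠ 0 := by
        intro h0
        rw [h0, abs_zero] at hsep
        nlinarith [habs k]
      rcases hre.lt_or_gt with h | h
      · exact Finset.mem_union_right _ (by
          simp only [hTm, Finset.mem_filter, Set.Finite.mem_toFinset, Set.mem_setOf_eq]
          exact ⟨hk2r, hk1, hkN, h⟩)
      · exact Finset.mem_union_left _ (by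
          simp only [hTp, Finset.mem_filter, Set.Finite.mem_toFinset, Set.mem_setOf_eq]
          exact ⟨hk2r, hk1, hkN, h⟩)
    have hcardle : ((((hfin (2*r)).toFinset.filter
        (fun k => r < ‖z k‖ ∧ N ≤ k)).card : ℝ)) ≤ Tp.card + Tm.card := by
      have h1 := Finset.card_le_card hsub
      have h2 := Finset.card_union_le Tp Tm
      exact_mod_cast le_trans h1 h2
    -- combine
    have hmul : ∀ x : ℝ, x * (c / (2*r)) * (2*r) = x * c := by
      intro x; field_simp
    have hTp' : (Tp.card : ℝ) * c ≤ 2 * B * r := by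
      have h := mul_le_mul_of_nonneg_right hTpcard (by positivity : (0:ℝ) ≤ 2*r)
      rw [hmul] at h
      linarith
    have hTm' : (Tm.card : ℝ) * c ≤ 2 * B * r := by
      have h := mul_le_mul_of_nonneg_right hTmcard (by positivity : (0:ℝ) ≤ 2*r)
      rw [hmul] at h
      linarith
    have hp0 : (0:ℝ) ≤ (Tp.card:ℝ) := Nat.cast_nonneg _
    have hm0 : (0:ℝ) ≤ (Tm.card:ℝ) := Nat.cast_nonneg _
    rw [hDdef, div_mul_eq_mul_div, le_div_iff₀ hc]
    have hmulc := mul_le_mul_of_nonneg_right hcardle hc.le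
    have hrng : ((Tp.card:ℝ) + Tm.card) * c = (Tp.card:ℝ) * c + (Tm.card:ℝ) * c := by ring
    rw [hrng] at hmulc
    linarith
  -- monotonicity of the counting finsets
  have hmono : ∀ a b : ℝ, a ≤ b → (hfin a).toFinset ⊆ (hfin b).toFinset := by
    intro a b hab k hk
    simp only [Set.Finite.mem_toFinset, Set.mem_setOf_eq] at hk ⊢
    linarith
  -- doubling step
  have step : ∀ r : ℝ, 0 < r →
      ((hfin (2*r)).toFinset.card : ℝ) ≤ ((hfin r).toFinset.card : ℝ) + N + D * r := by
    intro r hr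
    have hsub : (hfin (2*r)).toFinset ⊆
        (hfin r).toFinset ∪ (Finset.range N ∪ ((hfin (2*r)).toFinset.filter
          (fun k => r < ‖z k‖ ∧ N ≤ k))) := by
      intro k hk
      have hk' := hk
      simp only [Set.Finite.mem_toFinset, Set.mem_setOf_eq] at hk'
      by_cases h1 : ‖z k‖ ≤ r
      · exact Finset.mem_union_left _ (by
          simp only [Set.Finite.mem_toFinset, Set.mem_setOf_eq]; exact h1)
      · push_neg at h1
        refine Finset.mem_union_right _ ?_
        by_cases h2 : k < N
        · exact Finset.mem_union_left _ (Finset.mem_range.mpr h2)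
        · push_neg at h2
          exact Finset.mem_union_right _ (by
            simp only [Finset.mem_filter, Set.Finite.mem_toFinset, Set.mem_setOf_eq]
            exact ⟨hk', h1, h2⟩)
    have h1 := Finset.card_le_card hsub
    have h2 := Finset.card_union_le ((hfin r).toFinset)
      (Finset.range N ∪ ((hfin (2*r)).toFinset.filter
        (fun k => r < ‖z k‖ ∧ N ≤ k)))
    have h3 := Finset.card_union_le (Finset.range N)
      ((hfin (2*r)).toFinset.filter (fun k => r < ‖z k‖ ∧ N ≤ k))
    have h4 := key r hr
    have h5 : (hfin (2*r)).toFinset.card ≤ (hfin r).toFinset.card + (N +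
        ((hfin (2*r)).toFinset.filter (fun k => r < ‖z k‖ ∧ N ≤ k)).card) := by
      refine le_trans h1 (le_trans h2 ?_)
      have h3' := h3
      simp only [Finset.card_range] at *
      omega
    have h5' := (Nat.cast_le (α := ℝ)).mpr h5
    push_cast at h5'
    linarith
  -- induction along powers of two
  have hind : ∀ m : ℕ, ((hfin ((2:ℝ)^m)).toFinset.card : ℝ) ≤
      ((hfin 1).toFinset.card : ℝ) + ((N:ℝ) + D) * ((2:ℝ)^m - 1) := by
    intro m
    induction m with
    | zero => simp
    | succ m ih =>
      have h2m : (0:ℝ) < 2^m := by positivity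
      have hstep := step ((2:ℝ)^m) h2m
      rw [show (2:ℝ)^(m+1) = 2 * 2^m by ring]
      have h1 : (1:ℝ) ≤ 2^m := one_le_pow₀ (by norm_num : (1:ℝ) ≤ 2)
      nlinarith [(by positivity : (0:ℝ) ≤ (N:ℝ))]
  -- conclude
  refine ⟨((hfin 1).toFinset.card : ℝ) + 2 * ((N:ℝ) + D), ?_⟩
  simp only [eventually_map]
  filter_upwards [eventually_ge_atTop (1:ℝ)] with r hr
  have hr0 : (0:ℝ) < r := lt_of_lt_of_le one_pos hr
  obtain ⟨m, h1m, h2m⟩ : ∃ m : ℕ, (2:ℝ)^m ≤ r ∧ r ≤ 2^(m+1) := by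
    have hfl : 1 ≤ ⌊r⌋₊ := Nat.le_floor (by exact_mod_cast hr)
    refine ⟨Nat.log 2 ⌊r⌋₊, ?_, ?_⟩
    · have h := Nat.pow_log_le_self 2 (by omega : ⌊r⌋₊ ≠ 0)
      calc (2:ℝ)^(Nat.log 2 ⌊r⌋₊) = ((2^(Nat.log 2 ⌊r⌋₊) : ℕ) : ℝ) := by push_cast; ring
        _ ≤ (⌊r⌋₊ : ℝ) := by exact_mod_cast h
        _ ≤ r := Nat.floor_le hr0.le
    · have h := Nat.lt_pow_succ_log_self (by norm_num : 1 < 2) ⌊r⌋₊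
      have h' : r < (⌊r⌋₊ : ℝ) + 1 := Nat.lt_floor_add_one r
      have : ((⌊r⌋₊:ℕ):ℝ) + 1 ≤ ((2^(Nat.log 2 ⌊r⌋₊ + 1) : ℕ) : ℝ) := by
        exact_mod_cast Nat.succ_le_of_lt h
      calc r ≤ (⌊r⌋₊:ℝ) + 1 := h'.le
        _ ≤ ((2^(Nat.log 2 ⌊r⌋₊ + 1) : ℕ) : ℝ) := this
        _ = 2^(Nat.log 2 ⌊r⌋₊ + 1) := by push_cast; ring
  have hcard : (Nat.card {k : ℕ | ‖z k‖ ≤ r} : ℝ) = ((hfin r).toFinset.card : ℝ) := by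
    congr 1
    rw [Nat.card_coe_set_eq, Set.ncard_eq_toFinset_card _ (hfin r)]
  rw [hcard, div_le_iff₀ hr0]
  have hsubm := Finset.card_le_card (hmono r ((2:ℝ)^(m+1)) h2m)
  have hindm := hind (m+1)
  have h2m1 : (2:ℝ)^(m+1) ≤ 2 * r := by
    rw [pow_succ]
    linarith
  have hcast : ((hfin r).toFinset.card : ℝ) ≤ ((hfin ((2:ℝ)^(m+1))).toFinset.card : ℝ) := by
    exact_mod_cast hsubm
  have hn0 : (0:ℝ) ≤ ((hfin 1).toFinset.card : ℝ) := Nat.cast_nonneg _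
  have hND : (0:ℝ) ≤ (N:ℝ) + D := add_nonneg (Nat.cast_nonneg N) hD0
  have e1 : ((N:ℝ)+D) * ((2:ℝ)^(m+1) - 1) ≤ ((N:ℝ)+D) * (2*r) := by
    apply mul_le_mul_of_nonneg_left _ hND
    linarith
  have e2 : ((hfin 1).toFinset.card : ℝ) ≤ ((hfin 1).toFinset.card : ℝ) * r :=
    le_mul_of_one_le_right hn0 hr
  linarith [hcast, hindm, e1, e2]
end

section
/- Let W = {w_k} ⊂ {z : Re z > 0} be a sequence of finite upper density with w_k ≠ 0 for all k. Then the infinite product g(z) = Π_k (1 − z²/w_k²) converges locally uniformly on ℂ to an entire function of exponential type, i.e., limsup_{|z|→∞} ln|g(z)|/|z| < +∞, and g vanishes at every w_k and every −w_k (with multiplicity equal to the number of repetitions in W). -/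
open Filter Complex

open Finset Topology


private lemma np2 (n : ℕ) : ((n : ℝ) + 2) * (1/2)^n ≤ 8 * (3/4)^n := by
  have h : ((n : ℝ) + 2) ≤ 8 * (3/2)^n := by
    induction n with
    | zero => norm_num
    | succ m ih =>
      have h1 : (1:ℝ) ≤ (3/2:ℝ)^m := one_le_pow₀ (by norm_num)
      push_cast
      rw [pow_succ]
      push_cast at ih
      nlinarith
  have h2 : (0:ℝ) ≤ (1/2:ℝ)^n := by positivity
  calc ((n : ℝ) + 2) * (1/2)^n ≤ (8 * (3/2)^n) * (1/2)^n := by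
        exact mul_le_mul_of_nonneg_right h h2
    _ = 8 * (3/4)^n := by
        rw [mul_assoc, ← mul_pow]; norm_num

private lemma exp_lower {u : ℝ} (h0 : 0 ≤ u) (h1 : u ≤ 1/2) :
    Real.exp (-(2*u)) ≤ 1 - u := by
  have hE : 1 + 2*u ≤ Real.exp (2*u) := by
    have := Real.add_one_le_exp (2*u); linarith
  have hprod : Real.exp (-(2*u)) * Real.exp (2*u) = 1 := by
    rw [← Real.exp_add]; ring_nf; exact Real.exp_zero
  nlinarith [Real.exp_pos (-(2*u)), Real.exp_pos (2*u)]

private lemma gen_prod (c : ℕ → ℂ) (hc : Summable fun k => ‖c k‖) :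
    ∃ G : ℂ → ℂ,
      TendstoLocallyUniformly (fun N (z : ℂ) => ∏ k ∈ Finset.range N, (1 - z ^ 2 * c k)) G
        Filter.atTop ∧
      Differentiable ℂ G ∧
      (∀ z : ℂ, Tendsto (fun N => ∏ k ∈ Finset.range N, (1 - z ^ 2 * c k)) atTop (𝓝 (G z))) ∧
      (∀ z : ℂ, (∀ k, (1 : ℂ) - z ^ 2 * c k ≠ 0) → G z ≠ 0) := by
  set P : ℕ → ℂ → ℂ := fun N z => ∏ k ∈ Finset.range N, (1 - z ^ 2 * c k) with hP
  -- Step A : uniform convergence on closed balls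
  have key : ∀ R : ℝ, ∃ GR : ℂ → ℂ,
      TendstoUniformlyOn P GR atTop (Metric.closedBall 0 R) := by
    intro R
    obtain ⟨K, hK⟩ : ∃ K : ℕ, ∀ k, K ≤ k → R^2 * ‖c k‖ ≤ 1/2 := by
      have hu : Summable (fun k => R^2 * ‖c k‖) := hc.mul_left _
      have h0 := hu.tendsto_atTop_zero
      have := (h0.eventually (eventually_le_nhds (by norm_num : (0:ℝ) < 1/2)))
      exact eventually_atTop.mp this
    set L : ℕ → ℂ → ℂ := fun k z => if K ≤ k then Complex.log (1 - z^2 * c k) else 0 with hL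
    set M : ℕ → ℝ := fun k => 2 * (R^2 * ‖c k‖) with hM
    have hMsum : Summable M := (hc.mul_left _).mul_left _
    have hzsmall : ∀ k, K ≤ k → ∀ z ∈ Metric.closedBall (0:ℂ) R,
        ‖z ^ 2 * c k‖ ≤ R^2 * ‖c k‖ ∧ ‖z^2 * c k‖ ≤ 1/2 := by
      intro k hk z hz
      have hzR : ‖z‖ ≤ R := by simpa using Metric.mem_closedBall.mp hz
      have h0 : (0:ℝ) ≤ ‖z‖ := norm_nonneg _
      have : ‖z ^ 2 * c k‖ ≤ R^2 * ‖c k‖ := by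
        rw [norm_mul, norm_pow]
        have : ‖z‖^2 ≤ R^2 := by nlinarith
        exact mul_le_mul_of_nonneg_right this (norm_nonneg _)
      exact ⟨this, this.trans (hK k hk)⟩
    have hbound : ∀ k (z : ℂ), z ∈ Metric.closedBall (0:ℂ) R → ‖L k z‖ ≤ M k := by
      intro k z hz
      by_cases hk : K ≤ k
      · obtain ⟨h1, h2⟩ := hzsmall k hk z hz
        simp only [hL, if_pos hk]
        have : (1 : ℂ) - z^2 * c k = 1 + (-(z^2 * c k)) := by ring
        rw [this]
        have := Complex.norm_log_one_add_half_le_self (z := -(z^2 * c k)) (by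
          rwa [norm_neg])
        refine this.trans ?_
        rw [norm_neg, hM]
        nlinarith [norm_nonneg (z^2 * c k)]
      · simp only [hL, if_neg hk, norm_zero, hM]
        positivity
    have hS := tendstoUniformlyOn_tsum_nat hMsum hbound
    set S : ℂ → ℂ := fun z => ∑' k, L k z with hSdef
    set B : ℝ := ∑' k, M k with hB
    have hM0 : ∀ k, 0 ≤ M k := by intro k; rw [hM]; positivity
    have hLsum : ∀ z ∈ Metric.closedBall (0:ℂ) R, Summable fun k => L k z := by
      intro z hz
      exact Summable.of_norm_bounded hMsum (fun k => hbound k z hz)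
    have hSN_bd : ∀ N, ∀ z ∈ Metric.closedBall (0:ℂ) R,
        ‖∑ k ∈ Finset.range N, L k z‖ ≤ B := by
      intro N z hz
      refine (norm_sum_le _ _).trans ?_
      calc ∑ k ∈ Finset.range N, ‖L k z‖ ≤ ∑ k ∈ Finset.range N, M k :=
            Finset.sum_le_sum fun k _ => hbound k z hz
        _ ≤ B := Summable.sum_le_tsum _ (fun k _ => hM0 k) hMsum
    have hS_bd : ∀ z ∈ Metric.closedBall (0:ℂ) R, ‖S z‖ ≤ B := by
      intro z hz
      refine (norm_tsum_le_tsum_norm ?_).trans ?_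
      · exact (hLsum z hz).norm
      · exact Summable.tsum_le_tsum (fun k => hbound k z hz) (hLsum z hz).norm hMsum
    -- bound for the head P K on the ball
    obtain ⟨D, hD⟩ : ∃ D : ℝ, ∀ z ∈ Metric.closedBall (0:ℂ) R, ‖P K z‖ ≤ D := by
      have hcont : Continuous (P K) := by
        apply continuous_finset_prod
        intro i _
        exact continuous_const.sub ((continuous_pow 2).mul continuous_const)
      obtain ⟨D, hD⟩ := (isCompact_closedBall (0:ℂ) R).exists_bound_of_continuousOn
        hcont.continuousOn
      exact ⟨D, hD⟩
    have hD0 : ∀ z ∈ Metric.closedBall (0:ℂ) R, ‖P K z‖ ≤ |D| + 1 := fun z hz =>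
      (hD z hz).trans (by cases abs_cases D <;> linarith)
    set D' : ℝ := |D| + 1 with hD'
    have hD'0 : 0 < D' := by positivity
    -- uniform convergence of the exponentials times head
    refine ⟨fun z => P K z * Complex.exp (S z), ?_⟩
    have hunif : TendstoUniformlyOn
        (fun N z => P K z * Complex.exp (∑ k ∈ Finset.range N, L k z))
        (fun z => P K z * Complex.exp (S z)) atTop (Metric.closedBall 0 R) := by
      rw [Metric.tendstoUniformlyOn_iff]
      intro ε hε
      have hδpos : 0 < min 1 (ε / (2 * D' * Real.exp B + 1)) := by positivity
      have hSN := (Metric.tendstoUniformlyOn_iff.mp hS) _ hδpos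
      filter_upwards [hSN] with N hN z hz
      have hd := hN z hz
      set d := S z - ∑ k ∈ Finset.range N, L k z with hdd
      have hdist : dist (S z) (∑ k ∈ Finset.range N, L k z) = ‖d‖ := by
        rw [dist_eq_norm]
      rw [hdist] at hd
      have hd1 : ‖d‖ ≤ 1 := le_of_lt (lt_of_lt_of_le hd (min_le_left _ _))
      have hd2 : ‖d‖ < ε / (2 * D' * Real.exp B + 1) :=
        lt_of_lt_of_le hd (min_le_right _ _)
      have hfact : Complex.exp (S z) - Complex.exp (∑ k ∈ Finset.range N, L k z)
          = Complex.exp (∑ k ∈ Finset.range N, L k z) * (Complex.exp d - 1) := by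
        rw [mul_sub, mul_one, ← Complex.exp_add, hdd]; ring_nf
      have hexpN : ‖Complex.exp (∑ k ∈ Finset.range N, L k z)‖ ≤ Real.exp B := by
        rw [Complex.norm_exp]
        exact Real.exp_le_exp.mpr ((le_abs_self _).trans ((Complex.abs_re_le_norm _).trans (hSN_bd N z hz)))
      have hexpd : ‖Complex.exp d - 1‖ ≤ 2 * ‖d‖ := by
        simpa using Complex.norm_exp_sub_one_le (x := d)
          (by simpa using hd1)
      rw [dist_eq_norm]
      have : ‖P K z * Complex.exp (S z) -
          P K z * Complex.exp (∑ k ∈ Finset.range N, L k z)‖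
          = ‖P K z‖ * ‖Complex.exp (S z) - Complex.exp (∑ k ∈ Finset.range N, L k z)‖ := by
        rw [← norm_mul, mul_sub]
      rw [this, hfact, norm_mul]
      have hEpos : (0:ℝ) < Real.exp B := Real.exp_pos B
      calc ‖P K z‖ * (‖Complex.exp (∑ k ∈ Finset.range N, L k z)‖ * ‖Complex.exp d - 1‖)
          ≤ D' * (Real.exp B * (2 * ‖d‖)) := by
            have h1 := hD0 z hz
            have h2 : ‖Complex.exp (∑ k ∈ Finset.range N, L k z)‖ * ‖Complex.exp d - 1‖
                ≤ Real.exp B * (2 * ‖d‖) :=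
              mul_le_mul hexpN hexpd (norm_nonneg _) (le_of_lt hEpos)
            exact mul_le_mul h1 h2 (by positivity) (by positivity)
        _ < ε := by
            have h3 : 2 * D' * Real.exp B * ‖d‖ < 2 * D' * Real.exp B * (ε / (2 * D' * Real.exp B + 1)) := by
              apply mul_lt_mul_of_pos_left hd2; positivity
            have h4 : 2 * D' * Real.exp B * (ε / (2 * D' * Real.exp B + 1)) < ε := by
              rw [mul_div_assoc']
              rw [div_lt_iff₀ (by positivity)]
              nlinarith [hε]
            nlinarith
    -- partial products equal head times exponentials of partial log sums
    refine hunif.congr ?_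
    filter_upwards [eventually_ge_atTop K] with N hKN
    intro z hz
    have hne : ∀ k ∈ Finset.Ico K N, (1 : ℂ) - z^2 * c k ≠ 0 := by
      intro k hk
      obtain ⟨-, h2⟩ := hzsmall k (Finset.mem_Ico.mp hk).1 z hz
      intro h0
      have : (1:ℝ) ≤ ‖z^2 * c k‖ := by
        have : (1:ℂ) = z^2 * c k := by linear_combination h0
        rw [← this]; simp
      linarith
    have hfilter : (Finset.range N).filter (fun k => K ≤ k) = Finset.Ico K N := by
      ext k; simp [Finset.mem_filter, Finset.mem_range, Finset.mem_Ico, and_comm]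
    have hsumL : ∑ k ∈ Finset.range N, L k z
        = ∑ k ∈ Finset.Ico K N, Complex.log (1 - z ^ 2 * c k) := by
      simp only [hL]
      rw [← hfilter, Finset.sum_filter]
    have hexp : Complex.exp (∑ k ∈ Finset.range N, L k z)
        = ∏ k ∈ Finset.Ico K N, (1 - z^2 * c k) := by
      rw [hsumL, Complex.exp_sum]
      exact Finset.prod_congr rfl fun k hk => Complex.exp_log (hne k hk)
    show P K z * Complex.exp (∑ k ∈ Finset.range N, L k z) = P N z
    rw [hexp]
    simp only [hP]
    exact Finset.prod_range_mul_prod_Ico _ hKN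
  -- Step B : pointwise limit
  have hptl : ∀ z : ℂ, ∃ l : ℂ, Tendsto (fun N => P N z) atTop (𝓝 l) := by
    intro z
    obtain ⟨GR, hGR⟩ := key ‖z‖
    exact ⟨GR z, hGR.tendsto_at (by simp [Metric.mem_closedBall, dist_eq_norm])⟩
  choose G hG using hptl
  -- Step C : locally uniform convergence
  have hTLU : TendstoLocallyUniformly P G atTop := by
    rw [tendstoLocallyUniformly_iff_forall_isCompact]
    intro Kc hKc
    obtain ⟨R, hR⟩ := hKc.isBounded.subset_closedBall 0
    obtain ⟨GR, hGR⟩ := key R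
    refine (hGR.mono hR).congr_right ?_
    intro z hz
    exact tendsto_nhds_unique (hGR.tendsto_at (hR hz)) (hG z)
  -- Step D : differentiability
  have hdiff : Differentiable ℂ G := by
    rw [← differentiableOn_univ]
    refine (tendstoLocallyUniformlyOn_univ.mpr hTLU).differentiableOn ?_ isOpen_univ
    filter_upwards with N
    refine DifferentiableOn.mono ?_ (Set.subset_univ _)
    apply Differentiable.differentiableOn
    apply Differentiable.fun_finset_prod
    intro i _
    exact (differentiable_const (1:ℂ)).sub ((differentiable_pow 2).mul (differentiable_const _))
  refine ⟨G, hTLU, hdiff, hG, ?_⟩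
  -- Step E : nonvanishing
  intro z hz
  obtain ⟨K, hK⟩ : ∃ K : ℕ, ∀ k, K ≤ k → ‖z‖^2 * ‖c k‖ ≤ 1/2 := by
    have hu : Summable (fun k => ‖z‖^2 * ‖c k‖) := hc.mul_left _
    exact eventually_atTop.mp
      (hu.tendsto_atTop_zero.eventually (eventually_le_nhds (by norm_num : (0:ℝ) < 1/2)))
  have husum : Summable (fun k => ‖z‖^2 * ‖c k‖) := hc.mul_left _
  set T : ℝ := ∑' k, ‖z‖^2 * ‖c k‖ with hT
  have hu0 : ∀ k, 0 ≤ ‖z‖^2 * ‖c k‖ := fun k => by positivity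
  have hPK : P K z ≠ 0 := Finset.prod_ne_zero_iff.mpr fun k _ => hz k
  set c₀ : ℝ := ‖P K z‖ * Real.exp (-(2*T)) with hc₀
  have hc₀pos : 0 < c₀ := mul_pos (norm_pos_iff.mpr hPK) (Real.exp_pos _)
  have hclaim : ∀ N, K ≤ N → c₀ ≤ ‖P N z‖ := by
    intro N hN
    have hsplit : P N z = P K z * ∏ k ∈ Finset.Ico K N, (1 - z^2 * c k) := by
      simp only [hP]
      exact (Finset.prod_range_mul_prod_Ico _ hN).symm
    rw [hsplit, norm_mul, hc₀]
    refine mul_le_mul_of_nonneg_left ?_ (norm_nonneg _)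
    have h1 : Real.exp (-(2*T)) ≤ ∏ k ∈ Finset.Ico K N, Real.exp (-(2 * (‖z‖^2 * ‖c k‖))) := by
      rw [← Real.exp_sum]
      apply Real.exp_le_exp.mpr
      have hle : ∑ x ∈ Finset.Ico K N, (‖z‖^2 * ‖c x‖) ≤ T :=
        Summable.sum_le_tsum _ (fun k _ => hu0 k) husum
      have hsum : ∑ x ∈ Finset.Ico K N, -(2 * (‖z‖^2 * ‖c x‖))
          = -(2 * ∑ x ∈ Finset.Ico K N, (‖z‖^2 * ‖c x‖)) := by
        rw [Finset.mul_sum, ← Finset.sum_neg_distrib]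
      rw [hsum]
      linarith
    rw [norm_prod]
    refine h1.trans (Finset.prod_le_prod (fun k _ => (Real.exp_pos _).le) (fun k hk => ?_))
    have hu := hK k (Finset.mem_Ico.mp hk).1
    refine (exp_lower (hu0 k) hu).trans ?_
    have h3 := norm_sub_norm_le (1 : ℂ) (z^2 * c k)
    rw [norm_one, norm_mul, norm_pow] at h3
    exact h3
  have hnorm : Tendsto (fun N => ‖P N z‖) atTop (𝓝 ‖G z‖) := (hG z).norm
  have : c₀ ≤ ‖G z‖ := ge_of_tendsto hnorm (eventually_atTop.mpr ⟨K, hclaim⟩)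
  intro h0
  rw [h0, norm_zero] at this
  linarith

private lemma count_bound (w : ℕ → ℂ)
    (hfin : ∀ r : ℝ, ({k : ℕ | ‖w k‖ ≤ r}).Finite)
    (hdens : Filter.IsBoundedUnder (· ≤ ·) Filter.atTop
      (fun r : ℝ => (Nat.card {k : ℕ | ‖w k‖ ≤ r} : ℝ) / r)) :
    ∃ C : ℝ, 1 ≤ C ∧ ∀ t : ℝ, 1 ≤ t → ∀ s : Finset ℕ,
      (∀ k ∈ s, ‖w k‖ ≤ t) → (s.card : ℝ) ≤ C * t := by
  obtain ⟨b, hb⟩ := hdens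
  rw [Filter.eventually_map] at hb
  obtain ⟨R₀', hR₀'⟩ := eventually_atTop.mp hb
  set R₀ : ℝ := max R₀' 1 with hR₀def
  have hR₀1 : 1 ≤ R₀ := le_max_right _ _
  have hR₀pos : 0 < R₀ := lt_of_lt_of_le one_pos hR₀1
  have hR₀ : ∀ t : ℝ, R₀ ≤ t →
      (Nat.card {k : ℕ | ‖w k‖ ≤ t} : ℝ) / t ≤ b := fun t ht =>
    hR₀' t (le_trans (le_max_left _ _) ht)
  have hb0 : 0 ≤ b :=
    le_trans (div_nonneg (Nat.cast_nonneg _) hR₀pos.le) (hR₀ R₀ le_rfl)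
  have hNle : ∀ t : ℝ, R₀ ≤ t →
      (Nat.card {k : ℕ | ‖w k‖ ≤ t} : ℝ) ≤ b * t := by
    intro t ht
    have ht0 : 0 < t := lt_of_lt_of_le hR₀pos ht
    have := hR₀ t ht
    rw [div_le_iff₀ ht0] at this
    exact this
  refine ⟨max 1 (max b (b * R₀)), le_max_left _ _, ?_⟩
  set C : ℝ := max 1 (max b (b * R₀)) with hC
  have hC0 : 0 ≤ C := le_trans zero_le_one (le_max_left _ _)
  intro t ht s hs
  have hcard : (s.card : ℝ) ≤ (Nat.card {k : ℕ | ‖w k‖ ≤ t} : ℝ) := by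
    have hsub : s ⊆ (hfin t).toFinset := fun k hk => (hfin t).mem_toFinset.mpr (hs k hk)
    have h1 : s.card ≤ (hfin t).toFinset.card := Finset.card_le_card hsub
    have h2 : (hfin t).toFinset.card = Nat.card {k : ℕ | ‖w k‖ ≤ t} := by
      rw [Nat.card_coe_set_eq, Set.ncard_eq_toFinset_card _ (hfin t)]
    exact_mod_cast h2 ▸ h1
  have ht0 : 0 < t := lt_of_lt_of_le one_pos ht
  by_cases htR : R₀ ≤ t
  · refine hcard.trans ((hNle t htR).trans ?_)
    have hbC : b ≤ C := le_trans (le_max_left _ _) (le_max_right _ _)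
    exact mul_le_mul_of_nonneg_right hbC ht0.le
  · push_neg at htR
    have hmono : (Nat.card {k : ℕ | ‖w k‖ ≤ t} : ℝ)
        ≤ (Nat.card {k : ℕ | ‖w k‖ ≤ R₀} : ℝ) := by
      have := Nat.card_mono (hfin R₀) (fun k hk => le_trans hk htR.le)
      exact_mod_cast this
    refine hcard.trans (hmono.trans ?_)
    refine (hNle R₀ le_rfl).trans ?_
    have h1 : b * R₀ ≤ C := le_trans (le_max_right b _) (le_max_right _ _)
    exact h1.trans (le_mul_of_one_le_right hC0 ht)

private lemma fiber_sum_le (w : ℕ → ℂ) (C : ℝ) (hC0 : 0 ≤ C)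
    (hcnt : ∀ t : ℝ, 1 ≤ t → ∀ s : Finset ℕ,
      (∀ k ∈ s, ‖w k‖ ≤ t) → (s.card : ℝ) ≤ C * t)
    (s : Finset ℕ) (f : ℕ → ℝ) (ind : ℕ → ℕ) (t : ℕ → ℝ) (bnd : ℕ → ℝ)
    (hbnd0 : ∀ n, 0 ≤ bnd n) (ht0 : ∀ n, 0 ≤ t n)
    (ht1 : ∀ k ∈ s, 1 ≤ t (ind k))
    (hmem : ∀ k ∈ s, ‖w k‖ ≤ t (ind k))
    (hfb : ∀ k ∈ s, f k ≤ bnd (ind k)) :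
    ∑ k ∈ s, f k ≤ ∑ n ∈ Finset.range (s.sup ind + 1), C * t n * bnd n := by
  have hmaps : ∀ k ∈ s, ind k ∈ Finset.range (s.sup ind + 1) := fun k hk =>
    Finset.mem_range.mpr (Nat.lt_succ_of_le (Finset.le_sup hk))
  rw [← Finset.sum_fiberwise_of_maps_to hmaps f]
  refine Finset.sum_le_sum fun n _ => ?_
  set fib := s.filter (fun k => ind k = n) with hfib
  rcases fib.eq_empty_or_nonempty with he | hne
  · rw [he, Finset.sum_empty]
    exact mul_nonneg (mul_nonneg hC0 (ht0 n)) (hbnd0 n)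
  · obtain ⟨k₀, hk₀⟩ := hne
    have hk₀s : k₀ ∈ s := (Finset.mem_filter.mp hk₀).1
    have hik₀ : ind k₀ = n := (Finset.mem_filter.mp hk₀).2
    have ht1n : 1 ≤ t n := hik₀ ▸ ht1 k₀ hk₀s
    have hcard : (fib.card : ℝ) ≤ C * t n := by
      apply hcnt (t n) ht1n
      intro k hk
      have hks : k ∈ s := (Finset.mem_filter.mp hk).1
      have h' : ind k = n := (Finset.mem_filter.mp hk).2
      exact h' ▸ hmem k hks
    have hsum : ∑ k ∈ fib, f k ≤ fib.card • bnd n := by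
      apply Finset.sum_le_card_nsmul
      intro k hk
      have hks : k ∈ s := (Finset.mem_filter.mp hk).1
      have h' : ind k = n := (Finset.mem_filter.mp hk).2
      exact h' ▸ hfb k hks
    rw [nsmul_eq_mul] at hsum
    calc ∑ k ∈ fib, f k ≤ fib.card * bnd n := hsum
      _ ≤ (C * t n) * bnd n := mul_le_mul_of_nonneg_right hcard (hbnd0 n)

private lemma geom_partial_le {x : ℝ} (h0 : 0 ≤ x) (h1 : x < 1) (M : ℕ) :
    ∑ n ∈ Finset.range M, x^n ≤ (1 - x)⁻¹ := by
  have := Summable.sum_le_tsum (Finset.range M) (fun n _ => pow_nonneg h0 n)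
    (summable_geometric_of_lt_one h0 h1)
  rwa [tsum_geometric_of_lt_one h0 h1] at this

private lemma growth_bound (w : ℕ → ℂ) (hw0 : ∀ k, w k ≠ 0)
    (hfin : ∀ r : ℝ, ({k : ℕ | ‖w k‖ ≤ r}).Finite)
    (C : ℝ) (hC1 : 1 ≤ C)
    (hcnt : ∀ t : ℝ, 1 ≤ t → ∀ s : Finset ℕ,
      (∀ k ∈ s, ‖w k‖ ≤ t) → (s.card : ℝ) ≤ C * t) :
    ∃ τ : ℝ, 0 ≤ τ ∧ ∀ r : ℝ, 1 ≤ r → ∀ s : Finset ℕ,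
      ∑ k ∈ s, Real.log (1 + r^2 / (‖w k‖)^2) ≤ τ * r := by
  have hC0 : 0 ≤ C := zero_le_one.trans hC1
  have ha : ∀ k, 0 < ‖w k‖ := fun k => norm_pos_iff.mpr (hw0 k)
  set F₁ : Finset ℕ := (hfin 1).toFinset with hF₁
  set B₁ : ℝ := ∑ k ∈ F₁, Real.log (1 + 1/(‖w k‖)^2) with hB₁
  have hB₁0 : 0 ≤ B₁ := Finset.sum_nonneg fun k _ =>
    Real.log_nonneg (le_add_of_nonneg_right (by positivity))
  have hlog4 : (0:ℝ) ≤ Real.log 4 := Real.log_nonneg (by norm_num)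
  refine ⟨(B₁ + 2*F₁.card) + (32 * Real.log 4) * C + 4*C, by positivity, ?_⟩
  intro r hr s
  have hr0 : 0 < r := lt_of_lt_of_le one_pos hr
  set f : ℕ → ℝ := fun k => Real.log (1 + r^2 / (‖w k‖)^2) with hf
  have hf0 : ∀ k, 0 ≤ f k := fun k =>
    Real.log_nonneg (le_add_of_nonneg_right (by positivity))
  -- split the sum in three parts
  have hsplit1 := Finset.sum_filter_add_sum_filter_not s (fun k => ‖w k‖ ≤ 1) f
  set rest : Finset ℕ := s.filter (fun k => ¬ ‖w k‖ ≤ 1) with hrest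
  have hsplit2 := Finset.sum_filter_add_sum_filter_not rest (fun k => ‖w k‖ ≤ r) f
  set s1 : Finset ℕ := s.filter (fun k => ‖w k‖ ≤ 1) with hs1
  set s2 : Finset ℕ := rest.filter (fun k => ‖w k‖ ≤ r) with hs2
  set s3 : Finset ℕ := rest.filter (fun k => ¬ ‖w k‖ ≤ r) with hs3
  -- Part 1 : small moduli
  have part1 : ∑ k ∈ s1, f k ≤ (B₁ + 2*F₁.card) * r := by
    have hterm : ∀ k ∈ s1, f k ≤ Real.log (1 + 1/(‖w k‖)^2) + 2*r := by
      intro k hk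
      have hak : ‖w k‖ ≤ 1 := (Finset.mem_filter.mp hk).2
      have hak0 : 0 < ‖w k‖ := ha k
      have h1 : 1 + r^2/(‖w k‖)^2 ≤ r^2 * (1 + 1/(‖w k‖)^2) := by
        rw [mul_add, mul_one, mul_one_div]
        have : (1:ℝ) ≤ r^2 := by nlinarith
        linarith
      have h2 : f k ≤ Real.log (r^2 * (1 + 1/(‖w k‖)^2)) :=
        Real.log_le_log (by positivity) h1
      rw [Real.log_mul (by positivity) (by positivity), Real.log_pow] at h2
      have h3 : Real.log r ≤ r := (Real.log_le_sub_one_of_pos hr0).trans (by linarith)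
      push_cast at h2
      linarith
    have hsub : s1 ⊆ F₁ := by
      intro k hk
      rw [hF₁, Set.Finite.mem_toFinset]
      exact (Finset.mem_filter.mp hk).2
    calc ∑ k ∈ s1, f k ≤ ∑ k ∈ s1, (Real.log (1 + 1/(‖w k‖)^2) + 2*r) :=
          Finset.sum_le_sum hterm
      _ ≤ ∑ k ∈ F₁, (Real.log (1 + 1/(‖w k‖)^2) + 2*r) := by
          refine Finset.sum_le_sum_of_subset_of_nonneg hsub fun k _ _ => ?_
          have : 0 ≤ Real.log (1 + 1/(‖w k‖)^2) :=
            Real.log_nonneg (le_add_of_nonneg_right (by positivity))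
          linarith
      _ = B₁ + F₁.card * (2*r) := by
          rw [Finset.sum_add_distrib, Finset.sum_const, nsmul_eq_mul, hB₁]
      _ ≤ (B₁ + 2*F₁.card) * r := by nlinarith [Nat.cast_nonneg (α := ℝ) F₁.card]
  -- Part 2 : moduli in (1, r]
  have part2 : ∑ k ∈ s2, f k ≤ ((32 * Real.log 4) * C) * r := by
    set ind2 : ℕ → ℕ := fun k => Nat.log 2 ⌊r / ‖w k‖⌋₊ with hind2
    have hfacts : ∀ k ∈ s2, (2:ℝ)^(ind2 k) ≤ r / ‖w k‖ ∧
        r / ‖w k‖ < 2^(ind2 k + 1) := by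
      intro k hk
      have hk1 : ¬ ‖w k‖ ≤ 1 := by
        have := (Finset.mem_filter.mp hk).1
        rw [hrest] at this
        exact (Finset.mem_filter.mp this).2
      push_neg at hk1
      have hkr : ‖w k‖ ≤ r := (Finset.mem_filter.mp hk).2
      have hq1 : 1 ≤ r / ‖w k‖ := (one_le_div (ha k)).mpr hkr
      have hm1 : 1 ≤ ⌊r / ‖w k‖⌋₊ := Nat.le_floor (by exact_mod_cast hq1)
      have hm0 : ⌊r / ‖w k‖⌋₊ ≠ 0 := by omega
      constructor
      · have h1 := Nat.pow_log_le_self 2 hm0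
        have h2 : ((2^(ind2 k) : ℕ) : ℝ) ≤ (⌊r / ‖w k‖⌋₊ : ℝ) := by
          exact_mod_cast h1
        push_cast at h2
        exact h2.trans (Nat.floor_le (by positivity))
      · have h1 := Nat.lt_pow_succ_log_self (by norm_num : 1 < 2) ⌊r / ‖w k‖⌋₊
        have h2 : (⌊r / ‖w k‖⌋₊ : ℕ) + 1 ≤ 2^(ind2 k + 1) := h1
        have h3 := Nat.lt_floor_add_one (r / ‖w k‖)
        have h4 : ((⌊r / ‖w k‖⌋₊ : ℝ) + 1) ≤ ((2:ℝ)^(ind2 k + 1)) := by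
          exact_mod_cast h2
        linarith
    have hbd := fiber_sum_le w C hC0 hcnt s2 f ind2
      (fun n => r / 2^n) (fun n => ((n:ℝ)+2) * Real.log 4)
      (fun n => by positivity) (fun n => by positivity)
      (fun k hk => by
        obtain ⟨hlow, -⟩ := hfacts k hk
        have hk1 : ¬ ‖w k‖ ≤ 1 := by
          have := (Finset.mem_filter.mp hk).1
          rw [hrest] at this
          exact (Finset.mem_filter.mp this).2
        push_neg at hk1
        have h2 : (2:ℝ)^(ind2 k) ≤ r := by
          refine hlow.trans ?_
          exact div_le_self hr0.le hk1.le
        rw [le_div_iff₀ (by positivity : (0:ℝ) < 2^(ind2 k)), one_mul]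
        exact h2)
      (fun k hk => by
        obtain ⟨hlow, -⟩ := hfacts k hk
        rw [le_div_iff₀ (ha k)] at hlow
        rw [le_div_iff₀ (by positivity : (0:ℝ) < 2^(ind2 k))]
        linarith)
      (fun k hk => by
        obtain ⟨-, hhigh⟩ := hfacts k hk
        have hq0 : 0 ≤ r / ‖w k‖ := by positivity
        have h1 : (r / ‖w k‖)^2 ≤ ((2:ℝ)^(ind2 k + 1))^2 :=
          pow_le_pow_left₀ hq0 hhigh.le 2
        have h2 : ((2:ℝ)^(ind2 k + 1))^2 = 4^(ind2 k + 1) := by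
          rw [show (4:ℝ) = 2^2 by norm_num, ← pow_mul, ← pow_mul, mul_comm]
        have h3 : (1:ℝ) + r^2/(‖w k‖)^2 ≤ 4^(ind2 k + 2) := by
          rw [← div_pow]
          have h4 : (1:ℝ) ≤ (4:ℝ)^(ind2 k + 1) := one_le_pow₀ (by norm_num)
          have h5 : (4:ℝ)^(ind2 k + 2) = 4 * 4^(ind2 k + 1) := by ring
          nlinarith
        have h6 : f k ≤ Real.log (4^(ind2 k + 2)) := Real.log_le_log (by positivity) h3
        rw [Real.log_pow] at h6
        push_cast at h6
        show f k ≤ ((ind2 k : ℝ) + 2) * Real.log 4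
        linarith)
    refine hbd.trans ?_
    have hhalf : ∀ n : ℕ, ((1:ℝ)/2)^n = 1/2^n := fun n => by rw [div_pow, one_pow]
    have hterm : ∀ n ∈ Finset.range (s2.sup ind2 + 1),
        C * (r / 2^n) * (((n:ℝ)+2) * Real.log 4)
        = (C * r * Real.log 4) * (((n:ℝ)+2) * (1/2)^n) := by
      intro n _
      rw [hhalf]
      field_simp
    rw [Finset.sum_congr rfl hterm, ← Finset.mul_sum]
    have hgeo : ∑ n ∈ Finset.range (s2.sup ind2 + 1), (((n:ℝ)+2) * (1/2)^n) ≤ 32 := by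
      calc ∑ n ∈ Finset.range (s2.sup ind2 + 1), (((n:ℝ)+2) * (1/2)^n)
          ≤ ∑ n ∈ Finset.range (s2.sup ind2 + 1), 8 * (3/4:ℝ)^n :=
            Finset.sum_le_sum fun n _ => np2 n
        _ = 8 * ∑ n ∈ Finset.range (s2.sup ind2 + 1), (3/4:ℝ)^n := by
            rw [Finset.mul_sum]
        _ ≤ 8 * (1 - 3/4:ℝ)⁻¹ := by
            have := geom_partial_le (by norm_num : (0:ℝ) ≤ 3/4) (by norm_num)
              (s2.sup ind2 + 1)
            linarith
        _ = 32 := by norm_num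
    calc (C * r * Real.log 4) * ∑ n ∈ Finset.range (s2.sup ind2 + 1), (((n:ℝ)+2) * (1/2)^n)
        ≤ (C * r * Real.log 4) * 32 := by
          refine mul_le_mul_of_nonneg_left hgeo (by positivity)
      _ = ((32 * Real.log 4) * C) * r := by ring
  -- Part 3 : moduli > r
  have part3 : ∑ k ∈ s3, f k ≤ (4*C) * r := by
    set ind3 : ℕ → ℕ := fun k => Nat.log 2 ⌊‖w k‖ / r⌋₊ with hind3
    have hfacts : ∀ k ∈ s3, (2:ℝ)^(ind3 k) ≤ ‖w k‖ / r ∧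
        ‖w k‖ / r < 2^(ind3 k + 1) := by
      intro k hk
      have hkr : ¬ ‖w k‖ ≤ r := (Finset.mem_filter.mp hk).2
      push_neg at hkr
      have hq1 : 1 ≤ ‖w k‖ / r := by
        rw [le_div_iff₀ hr0, one_mul]; exact hkr.le
      have hm1 : 1 ≤ ⌊‖w k‖ / r⌋₊ := Nat.le_floor (by exact_mod_cast hq1)
      have hm0 : ⌊‖w k‖ / r⌋₊ ≠ 0 := by omega
      constructor
      · have h1 := Nat.pow_log_le_self 2 hm0
        have h2 : ((2^(ind3 k) : ℕ) : ℝ) ≤ (⌊‖w k‖ / r⌋₊ : ℝ) := by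
          exact_mod_cast h1
        push_cast at h2
        exact h2.trans (Nat.floor_le (by positivity))
      · have h1 := Nat.lt_pow_succ_log_self (by norm_num : 1 < 2) ⌊‖w k‖ / r⌋₊
        have h2 : (⌊‖w k‖ / r⌋₊ : ℕ) + 1 ≤ 2^(ind3 k + 1) := h1
        have h3 := Nat.lt_floor_add_one (‖w k‖ / r)
        have h4 : ((⌊‖w k‖ / r⌋₊ : ℝ) + 1) ≤ ((2:ℝ)^(ind3 k + 1)) := by
          exact_mod_cast h2
        linarith
    have hbd := fiber_sum_le w C hC0 hcnt s3 f ind3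
      (fun n => r * 2^(n+1)) (fun n => (1/4:ℝ)^n)
      (fun n => by positivity) (fun n => by positivity)
      (fun k hk => by
        show (1:ℝ) ≤ r * 2^(ind3 k + 1)
        have h1 : (1:ℝ) ≤ 2^(ind3 k + 1) := one_le_pow₀ (by norm_num)
        nlinarith)
      (fun k hk => by
        show ‖w k‖ ≤ r * 2^(ind3 k + 1)
        obtain ⟨-, hhigh⟩ := hfacts k hk
        rw [div_lt_iff₀ hr0] at hhigh
        nlinarith)
      (fun k hk => by
        show f k ≤ (1/4:ℝ)^(ind3 k)
        obtain ⟨hlow, -⟩ := hfacts k hk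
        rw [le_div_iff₀ hr0] at hlow
        have hrk : r / ‖w k‖ ≤ 1 / 2^(ind3 k) := by
          rw [div_le_div_iff₀ (ha k) (by positivity : (0:ℝ) < 2^(ind3 k))]
          nlinarith
        have hsq : (r / ‖w k‖)^2 ≤ ((1:ℝ)/2^(ind3 k))^2 :=
          pow_le_pow_left₀ (by positivity) hrk 2
        have heq : ((1:ℝ)/2^(ind3 k))^2 = (1/4)^(ind3 k) := by
          rw [show (1:ℝ)/2^(ind3 k) = (1/2)^(ind3 k) by rw [div_pow, one_pow],
            ← pow_mul, mul_comm, pow_mul]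
          norm_num
        have hlog := Real.log_le_sub_one_of_pos
          (show (0:ℝ) < 1 + r^2/(‖w k‖)^2 by positivity)
        have hdivpow : r^2/(‖w k‖)^2 = (r / ‖w k‖)^2 :=
          (div_pow r _ 2).symm
        rw [hf]
        simp only []
        rw [hdivpow] at hlog ⊢
        linarith [heq ▸ hsq])
    refine hbd.trans ?_
    have hterm : ∀ n ∈ Finset.range (s3.sup ind3 + 1),
        C * (r * 2^(n+1)) * ((1/4:ℝ)^n) = (2*C*r) * ((1/2:ℝ)^n) := by
      intro n _
      have h2 : (2:ℝ)^n * (1/4)^n = (1/2)^n := by rw [← mul_pow]; norm_num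
      calc C * (r * 2^(n+1)) * ((1/4:ℝ)^n) = (2*C*r) * ((2:ℝ)^n * (1/4)^n) := by
            rw [pow_succ]; ring
        _ = (2*C*r) * ((1/2:ℝ)^n) := by rw [h2]
    rw [Finset.sum_congr rfl hterm, ← Finset.mul_sum]
    have hgeo : ∑ n ∈ Finset.range (s3.sup ind3 + 1), ((1/2:ℝ))^n ≤ 2 := by
      have := geom_partial_le (by norm_num : (0:ℝ) ≤ 1/2) (by norm_num) (s3.sup ind3 + 1)
      norm_num at this
      linarith
    calc (2*C*r) * ∑ n ∈ Finset.range (s3.sup ind3 + 1), ((1/2:ℝ))^n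
        ≤ (2*C*r) * 2 := mul_le_mul_of_nonneg_left hgeo (by positivity)
      _ = (4*C) * r := by ring
  calc ∑ k ∈ s, f k = ∑ k ∈ s1, f k + (∑ k ∈ s2, f k + ∑ k ∈ s3, f k) := by
        rw [hsplit2, hsplit1]
    _ ≤ (B₁ + 2*F₁.card) * r + (((32 * Real.log 4) * C) * r + (4*C) * r) := by
        have := part1; have := part2; have := part3; linarith
    _ = ((B₁ + 2*F₁.card) + (32 * Real.log 4) * C + 4*C) * r := by ring

private lemma inv_sq_summable (w : ℕ → ℂ) (hw0 : ∀ k, w k ≠ 0)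
    (hfin : ∀ r : ℝ, ({k : ℕ | ‖w k‖ ≤ r}).Finite)
    (C : ℝ) (hC1 : 1 ≤ C)
    (hcnt : ∀ t : ℝ, 1 ≤ t → ∀ s : Finset ℕ,
      (∀ k ∈ s, ‖w k‖ ≤ t) → (s.card : ℝ) ≤ C * t) :
    Summable (fun k => ((‖w k‖)^2)⁻¹) := by
  have hC0 : 0 ≤ C := zero_le_one.trans hC1
  have ha : ∀ k, 0 < ‖w k‖ := fun k => norm_pos_iff.mpr (hw0 k)
  set F₁ : Finset ℕ := (hfin 1).toFinset with hF₁
  set B₂ : ℝ := ∑ k ∈ F₁, ((‖w k‖)^2)⁻¹ with hB₂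
  set f : ℕ → ℝ := fun k => ((‖w k‖)^2)⁻¹ with hf
  have hf0 : ∀ k, 0 ≤ f k := fun k => by positivity
  apply summable_of_sum_range_le (c := B₂ + 4*C) hf0
  intro N
  set s : Finset ℕ := Finset.range N with hs
  have hsplit1 := Finset.sum_filter_add_sum_filter_not s (fun k => ‖w k‖ ≤ 1) f
  set s1 : Finset ℕ := s.filter (fun k => ‖w k‖ ≤ 1) with hs1
  set rest : Finset ℕ := s.filter (fun k => ¬ ‖w k‖ ≤ 1) with hrest
  have part1 : ∑ k ∈ s1, f k ≤ B₂ := by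
    refine Finset.sum_le_sum_of_subset_of_nonneg ?_ fun k _ _ => hf0 k
    intro k hk
    rw [hF₁, Set.Finite.mem_toFinset]
    exact (Finset.mem_filter.mp hk).2
  have part2 : ∑ k ∈ rest, f k ≤ 4*C := by
    set ind : ℕ → ℕ := fun k => Nat.log 2 ⌊‖w k‖⌋₊ with hind
    have hfacts : ∀ k ∈ rest, (2:ℝ)^(ind k) ≤ ‖w k‖ ∧
        ‖w k‖ < 2^(ind k + 1) := by
      intro k hk
      have hk1 : ¬ ‖w k‖ ≤ 1 := (Finset.mem_filter.mp hk).2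
      push_neg at hk1
      have hm1 : 1 ≤ ⌊‖w k‖⌋₊ := Nat.le_floor (by exact_mod_cast hk1.le)
      have hm0 : ⌊‖w k‖⌋₊ ≠ 0 := by omega
      constructor
      · have h1 := Nat.pow_log_le_self 2 hm0
        have h2 : ((2^(ind k) : ℕ) : ℝ) ≤ (⌊‖w k‖⌋₊ : ℝ) := by exact_mod_cast h1
        push_cast at h2
        exact h2.trans (Nat.floor_le (by positivity))
      · have h1 := Nat.lt_pow_succ_log_self (by norm_num : 1 < 2) ⌊‖w k‖⌋₊
        have h2 : (⌊‖w k‖⌋₊ : ℕ) + 1 ≤ 2^(ind k + 1) := h1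
        have h3 := Nat.lt_floor_add_one (‖w k‖)
        have h4 : ((⌊‖w k‖⌋₊ : ℝ) + 1) ≤ ((2:ℝ)^(ind k + 1)) := by
          exact_mod_cast h2
        linarith
    have hbd := fiber_sum_le w C hC0 hcnt rest f ind
      (fun n => (2:ℝ)^(n+1)) (fun n => (1/4:ℝ)^n)
      (fun n => by positivity) (fun n => by positivity)
      (fun k hk => by
        show (1:ℝ) ≤ 2^(ind k + 1)
        exact one_le_pow₀ (by norm_num))
      (fun k hk => by
        show ‖w k‖ ≤ 2^(ind k + 1)
        exact (hfacts k hk).2.le)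
      (fun k hk => by
        show f k ≤ (1/4:ℝ)^(ind k)
        obtain ⟨hlow, -⟩ := hfacts k hk
        have h1 : ((2:ℝ)^(ind k))^2 ≤ (‖w k‖)^2 :=
          pow_le_pow_left₀ (by positivity) hlow 2
        have h2 : ((2:ℝ)^(ind k))^2 = 4^(ind k) := by
          rw [← pow_mul, mul_comm, pow_mul]; norm_num
        rw [hf]
        simp only []
        rw [inv_le_comm₀ (pow_pos (ha k) 2) (by positivity : (0:ℝ) < (1/4:ℝ)^(ind k))]
        have h3 : ((1/4:ℝ)^(ind k))⁻¹ = 4^(ind k) := by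
          rw [show (1/4:ℝ) = 4⁻¹ by norm_num, inv_pow, inv_inv]
        rw [h3]
        linarith [h2 ▸ h1])
    refine hbd.trans ?_
    have hterm : ∀ n ∈ Finset.range (rest.sup ind + 1),
        C * ((2:ℝ)^(n+1)) * ((1/4:ℝ)^n) = (2*C) * ((1/2:ℝ)^n) := by
      intro n _
      have h2 : (2:ℝ)^n * (1/4)^n = (1/2)^n := by rw [← mul_pow]; norm_num
      calc C * ((2:ℝ)^(n+1)) * ((1/4:ℝ)^n) = (2*C) * ((2:ℝ)^n * (1/4)^n) := by
            rw [pow_succ]; ring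
        _ = (2*C) * ((1/2:ℝ)^n) := by rw [h2]
    rw [Finset.sum_congr rfl hterm, ← Finset.mul_sum]
    have hgeo : ∑ n ∈ Finset.range (rest.sup ind + 1), ((1/2:ℝ))^n ≤ 2 := by
      have := geom_partial_le (by norm_num : (0:ℝ) ≤ 1/2) (by norm_num) (rest.sup ind + 1)
      norm_num at this
      linarith
    calc (2*C) * ∑ n ∈ Finset.range (rest.sup ind + 1), ((1/2:ℝ))^n
        ≤ (2*C) * 2 := mul_le_mul_of_nonneg_left hgeo (by positivity)
      _ = 4*C := by ring
  calc ∑ k ∈ Finset.range N, f k = ∑ k ∈ s1, f k + ∑ k ∈ rest, f k := hsplit1.symm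
    _ ≤ B₂ + 4*C := add_le_add part1 part2

/-- For a sequence `W = {w_k}` in the right half-plane of finite upper density, the product
`g(z) = Π_k (1 − z²/w_k²)` converges locally uniformly to an entire function of exponential
type which vanishes at each `±w_k` with multiplicity equal to the number of repetitions. -/
theorem stmt_10 (w : ℕ → ℂ) (hw : ∀ k, 0 < (w k).re)
    (hfin : ∀ r : ℝ, ({k : ℕ | ‖w k‖ ≤ r}).Finite)
    (hdens : Filter.IsBoundedUnder (· ≤ ·) Filter.atTop
      (fun r : ℝ => (Nat.card {k : ℕ | ‖w k‖ ≤ r} : ℝ) / r)) :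
    ∃ g : ℂ → ℂ,
      TendstoLocallyUniformly
        (fun N : ℕ => fun z : ℂ => ∏ k ∈ Finset.range N, (1 - z ^ 2 / (w k) ^ 2)) g atTop ∧
      Differentiable ℂ g ∧
      (∃ τ : ℝ, ∀ᶠ z : ℂ in Filter.comap (fun z : ℂ => ‖z‖) Filter.atTop,
        Real.log (‖g z‖) ≤ τ * ‖z‖) ∧
      (∀ z₀ : ℂ, ∃ h : ℂ → ℂ, Differentiable ℂ h ∧ h z₀ ≠ 0 ∧
        ∀ z : ℂ, g z
          = (z - z₀) ^ (Nat.card {k : ℕ | w k = z₀} + Nat.card {k : ℕ | w k = -z₀}) * h z) := by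
  have hw0 : ∀ k, w k ≠ 0 := by
    intro k h
    have := hw k
    rw [h] at this
    simp at this
  have ha : ∀ k, 0 < ‖w k‖ := fun k => norm_pos_iff.mpr (hw0 k)
  obtain ⟨C, hC1, hcnt⟩ := count_bound w hfin hdens
  have hsum0 := inv_sq_summable w hw0 hfin C hC1 hcnt
  set c : ℕ → ℂ := fun k => ((w k)^2)⁻¹ with hc
  have hsum : Summable (fun k => ‖c k‖) := by
    have : (fun k => ‖c k‖) = fun k => ((‖w k‖)^2)⁻¹ := by
      funext k
      rw [hc]
      simp [map_inv₀, map_pow]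
    rw [this]
    exact hsum0
  obtain ⟨G, hTLU, hdiff, hpt, hnz⟩ := gen_prod c hsum
  have hfuneq : (fun N : ℕ => fun z : ℂ => ∏ k ∈ Finset.range N, (1 - z ^ 2 / (w k) ^ 2))
      = fun N (z : ℂ) => ∏ k ∈ Finset.range N, (1 - z ^ 2 * c k) := by
    funext N z
    exact Finset.prod_congr rfl fun k _ => by rw [hc, div_eq_mul_inv]
  have hne_of_not : ∀ z₀ : ℂ, ∀ k, ¬(w k = z₀ ∨ w k = -z₀) → (1:ℂ) - z₀^2 * c k ≠ 0 := by
    intro z₀ k hk h0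
    have hwkne : (w k)^2 ≠ 0 := pow_ne_zero _ (hw0 k)
    have h1 : z₀^2 * ((w k)^2)⁻¹ = 1 := by
      simp only [hc] at h0
      linear_combination -h0
    have h2 : (w k)^2 = z₀^2 := by
      rw [← div_eq_mul_inv, div_eq_one_iff_eq hwkne] at h1
      linear_combination -h1
    have h3 : (w k - z₀) * (w k + z₀) = 0 := by linear_combination h2
    rcases mul_eq_zero.mp h3 with h | h
    · exact hk (Or.inl (by linear_combination h))
    · exact hk (Or.inr (by linear_combination h))
  refine ⟨G, by rw [hfuneq]; exact hTLU, hdiff, ?_, ?_⟩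
  · -- exponential type
    obtain ⟨τ, hτ0, hτ⟩ := growth_bound w hw0 hfin C hC1 hcnt
    refine ⟨τ, ?_⟩
    rw [Filter.eventually_comap]
    filter_upwards [eventually_ge_atTop (1:ℝ)] with r hr z hz
    have hr1 : 1 ≤ ‖z‖ := hz ▸ hr
    have hPb : ∀ N, ‖∏ k ∈ Finset.range N, (1 - z^2 * c k)‖
        ≤ Real.exp (τ * ‖z‖) := by
      intro N
      have h1 : ‖∏ k ∈ Finset.range N, (1 - z^2 * c k)‖
          = ∏ k ∈ Finset.range N, ‖1 - z^2 * c k‖ :=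
        norm_prod _ _
      have h2 : ∏ k ∈ Finset.range N, ‖1 - z^2 * c k‖
          ≤ ∏ k ∈ Finset.range N, (1 + (‖z‖)^2 / (‖w k‖)^2) := by
        refine Finset.prod_le_prod (fun k _ => norm_nonneg _) (fun k _ => ?_)
        have h3 : ‖1 - z^2 * c k‖ ≤ 1 + ‖z‖ ^ 2 * ‖c k‖ := by
          have h3' := norm_sub_le (1:ℂ) (z^2 * c k)
          rw [norm_one] at h3'
          simpa [map_mul, map_pow] using h3'
        have h4 : ‖c k‖ = ((‖w k‖)^2)⁻¹ := by
          rw [hc]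
          simp [map_inv₀, map_pow]
        rw [h4] at h3
        simpa [div_eq_mul_inv] using h3
      have h5 : ∏ k ∈ Finset.range N, (1 + (‖z‖)^2 / (‖w k‖)^2)
          = Real.exp (∑ k ∈ Finset.range N,
              Real.log (1 + (‖z‖)^2 / (‖w k‖)^2)) := by
        rw [Real.exp_sum]
        refine (Finset.prod_congr rfl fun k _ => ?_).symm
        exact Real.exp_log (by positivity)
      rw [h1]
      calc ∏ k ∈ Finset.range N, ‖1 - z^2 * c k‖
          ≤ ∏ k ∈ Finset.range N, (1 + (‖z‖)^2 / (‖w k‖)^2) := h2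
        _ = Real.exp (∑ k ∈ Finset.range N,
              Real.log (1 + (‖z‖)^2 / (‖w k‖)^2)) := h5
        _ ≤ Real.exp (τ * ‖z‖) :=
            Real.exp_le_exp.mpr (hτ (‖z‖) hr1 (Finset.range N))
    have htend : Tendsto (fun N => ‖∏ k ∈ Finset.range N, (1 - z^2 * c k)‖)
        atTop (𝓝 (‖G z‖)) := (continuous_norm.tendsto _).comp (hpt z)
    have hGb : ‖G z‖ ≤ Real.exp (τ * ‖z‖) :=
      le_of_tendsto htend (Eventually.of_forall hPb)
    rcases eq_or_ne (G z) 0 with h | h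
    · rw [h]
      simp only [norm_zero, Real.log_zero]
      have : (0:ℝ) ≤ ‖z‖ := norm_nonneg _
      nlinarith
    · have := Real.log_le_log (norm_pos_iff.mpr h) hGb
      rwa [Real.log_exp] at this
  · -- multiplicity
    intro z₀
    have hS₀fin : ({k : ℕ | w k = z₀ ∨ w k = -z₀}).Finite := by
      refine (hfin (‖z₀‖)).subset ?_
      rintro k (h | h)
      · simp [Set.mem_setOf_eq, h]
      · rw [Set.mem_setOf_eq, h, norm_neg]
    set Fs : Finset ℕ := hS₀fin.toFinset with hFs
    set n : ℕ := Fs.card with hn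
    have hcards : Nat.card {k : ℕ | w k = z₀} + Nat.card {k : ℕ | w k = -z₀} = n := by
      rcases eq_or_ne z₀ 0 with rfl | hz₀
      · have h1 : {k : ℕ | w k = 0} = ∅ := by
          ext k; simp [hw0 k]
        have h2 : {k : ℕ | w k = -0} = ∅ := by
          rw [neg_zero]; exact h1
        have h3 : {k : ℕ | w k = 0 ∨ w k = -0} = ∅ := by
          ext k; simp [hw0 k]
        have hn0 : n = 0 := by
          rw [hn, hFs, Finset.card_eq_zero, Set.Finite.toFinset_eq_empty]
          exact h3
        rw [h1, h2, hn0]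
        simp
      · have hdisj : Disjoint {k : ℕ | w k = z₀} {k : ℕ | w k = -z₀} := by
          rw [Set.disjoint_left]
          intro k h1 h2
          rw [Set.mem_setOf_eq] at h1 h2
          exact hz₀ (by linear_combination (1/2 : ℂ) * (h1.symm.trans h2))
        have hfin1 : {k : ℕ | w k = z₀}.Finite := hS₀fin.subset (fun k h => Or.inl h)
        have hfin2 : {k : ℕ | w k = -z₀}.Finite := hS₀fin.subset (fun k h => Or.inr h)
        have hunion : {k : ℕ | w k = z₀} ∪ {k : ℕ | w k = -z₀}
            = {k : ℕ | w k = z₀ ∨ w k = -z₀} := by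
          ext k; simp [Set.mem_setOf_eq]
        rw [Nat.card_coe_set_eq, Nat.card_coe_set_eq,
          ← Set.ncard_union_eq hdisj hfin1 hfin2, hunion, hn, hFs,
          Set.ncard_eq_toFinset_card _ hS₀fin]
    by_cases hF : Fs = ∅
    · refine ⟨G, hdiff, ?_, ?_⟩
      · refine hnz z₀ (fun k => hne_of_not z₀ k ?_)
        intro hk
        have : k ∈ Fs := hS₀fin.mem_toFinset.mpr hk
        rw [hF] at this
        exact absurd this (Finset.notMem_empty k)
      · intro z
        have hn0 : n = 0 := by rw [hn, hF, Finset.card_empty]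
        rw [hcards, hn0, pow_zero, one_mul]
    · obtain ⟨k₀, hk₀⟩ := Finset.nonempty_iff_ne_empty.mpr hF
      have hk₀S : w k₀ = z₀ ∨ w k₀ = -z₀ := hS₀fin.mem_toFinset.mp hk₀
      have hz₀ : z₀ ≠ 0 := by
        rcases hk₀S with h | h
        · exact fun h0 => hw0 k₀ (by rw [h, h0])
        · exact fun h0 => hw0 k₀ (by rw [h, h0, neg_zero])
      set c' : ℕ → ℂ := fun k => if k ∈ Fs then 0 else c k with hc'
      have hsum' : Summable fun k => ‖c' k‖ := by
        refine Summable.of_nonneg_of_le (fun k => norm_nonneg _) (fun k => ?_) hsum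
        rw [hc']
        by_cases h : k ∈ Fs
        · simp [h]
        · simp [h]
      obtain ⟨G', hTLU', hdiff', hpt', hnz'⟩ := gen_prod c' hsum'
      set q : ℂ → ℂ := fun z => -(z + z₀)/z₀^2 with hq
      have hwk2 : ∀ k ∈ Fs, (w k)^2 = z₀^2 := by
        intro k hk
        rcases hS₀fin.mem_toFinset.mp hk with h | h
        · rw [h]
        · rw [h]; ring
      refine ⟨fun z => q z ^ n * G' z, ?_, ?_, ?_⟩
      · refine Differentiable.mul (Differentiable.pow ?_ n) hdiff'
        exact ((differentiable_id.add_const z₀).neg).div_const _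
      · refine mul_ne_zero (pow_ne_zero _ ?_) ?_
        · rw [hq]
          simp only
          refine div_ne_zero (neg_ne_zero.mpr ?_) (pow_ne_zero _ hz₀)
          intro h
          exact hz₀ (by linear_combination (1/2 : ℂ) * h)
        · refine hnz' z₀ (fun k => ?_)
          rw [hc']
          by_cases h : k ∈ Fs
          · simp [h]
          · simp only [if_neg h]
            refine hne_of_not z₀ k ?_
            intro hk
            exact h (hS₀fin.mem_toFinset.mpr hk)
      · intro z
        rw [hcards]
        have hfac : ∀ N, Fs.sup id + 1 ≤ N →
            (∏ k ∈ Finset.range N, (1 - z^2 * c k))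
            = ((z - z₀) * q z)^n * ∏ k ∈ Finset.range N, (1 - z^2 * c' k) := by
          intro N hN
          have hsub : Fs ⊆ Finset.range N := by
            intro k hk
            refine Finset.mem_range.mpr ?_
            have := Finset.le_sup (f := id) hk
            simp only [id] at this
            omega
          rw [← Finset.prod_sdiff hsub, ← Finset.prod_sdiff hsub (f := fun k => 1 - z^2 * c' k)]
          have hper : ∀ k ∈ Fs, (1:ℂ) - z^2 * c k = (z - z₀) * q z := by
            intro k hk
            have h2 := hwk2 k hk
            simp only [hc, hq]
            rw [h2]
            have hzz : z₀^2 ≠ 0 := pow_ne_zero _ hz₀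
            field_simp
            ring
          have h1 : ∏ k ∈ Fs, ((1:ℂ) - z^2 * c k) = ((z - z₀) * q z)^n := by
            rw [Finset.prod_congr rfl hper, Finset.prod_const, hn]
          have h3 : ∏ k ∈ Fs, ((1:ℂ) - z^2 * c' k) = 1 :=
            Finset.prod_eq_one (fun k hk => by rw [hc']; simp [hk])
          have h4 : ∀ k ∈ Finset.range N \ Fs, (1:ℂ) - z^2 * c' k = 1 - z^2 * c k := by
            intro k hk
            rw [hc']
            simp [(Finset.mem_sdiff.mp hk).2]
          rw [h1, h3, mul_one, Finset.prod_congr rfl h4]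
          ring
        have ht1 : Tendsto (fun N => ∏ k ∈ Finset.range N, (1 - z^2 * c k)) atTop
            (𝓝 (((z - z₀) * q z)^n * G' z)) := by
          refine Filter.Tendsto.congr' ?_ ((hpt' z).const_mul (((z - z₀) * q z)^n))
          filter_upwards [eventually_ge_atTop (Fs.sup id + 1)] with N hN
          exact (hfac N hN).symm
        have hGeq := tendsto_nhds_unique (hpt z) ht1
        rw [hGeq, mul_pow]
        ring
end
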